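/- For 1 ≤ p < ∞ define for F : 𝓧 → ℝ the norm ‖F‖_{𝓛^p} = sup{ (Σᵢ₌₁ᵏ |F(ηᵢ)|^p ‖ηᵢ‖)^{1/p} : ηᵢ ∈ 𝓧 with pairwise disjoint supports }. Then the set 𝓛^p(𝓧) of functions with finite norm is a vector space and ‖·‖_{𝓛^p} is a norm on it. -/

import Mathlib

open MeasureTheory Set Filter
open scoped ENNReal Classical

variable {X : Type*} [MetricSpace X] [MeasurableSpace X]

/-- Total mass of a measure, as a real number. -/
noncomputable def mass (ν : Measure X) : ℝ := (ν Set.univ).toReal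

/-- The support of a measure. -/
def msupp (ν : Measure X) : Set X := {x : X | ∀ ε : ℝ, 0 < ε → 0 < ν (Metric.ball x ε)}

/-- The set `𝓜` of measures dominated by `μ` with compact support. -/
def MM (μ : Measure X) : Set (Measure X) := {ν | ν ≤ μ ∧ IsCompact (msupp ν)}

/-- Gauge function `h` used in the definition of the mass transport metric. -/
def IsGauge (h : ℝ → ℝ) : Prop :=
  StrictMonoOn h (Set.Ici 0) ∧ ContinuousOn h (Set.Ici 0) ∧ h 0 = 0 ∧
  Tendsto (fun ε => h ε / ε) (nhdsWithin 0 (Set.Ioi 0)) (nhds 0) ∧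
  (∀ a b : ℝ, 0 ≤ a → 0 ≤ b → h a + h b ≤ h (a + b)) ∧
  Tendsto h atTop atTop

/-- `Γ_{ε,δ}(ν,η) ≠ ∅`: existence of a countable mass-transport decomposition. -/
def GammaDecomp (μ : Measure X) (ε δ : ℝ) (ν η : Measure X) : Prop :=
  ∃ νi ηi : ℕ → Measure X,
    (∀ i, νi i ∈ MM μ) ∧ (∀ i, ηi i ∈ MM μ) ∧
    ν = Measure.sum νi ∧ η = Measure.sum ηi ∧
    (∃ S : ℝ, HasSum (fun i => |mass (νi i) - mass (ηi i)|) S ∧ S ≤ δ) ∧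
    (∀ i, Metric.diam (msupp (νi i) ∪ msupp (ηi i)) ≤ ε)

/-- The mass transport metric `d_𝓜`. -/
noncomputable def dM (h : ℝ → ℝ) (μ : Measure X) (ν η : Measure X) : ℝ :=
  sInf {ε : ℝ | 0 < ε ∧ GammaDecomp μ ε (h ε) ν η}

/-- A rectifiable curve in `𝓜` subparametrized by arc-length: a `1`-Lipschitz map
`[0,b] → (𝓜, d_𝓜)`. -/
def IsCurveM (h : ℝ → ℝ) (μ : Measure X) (b : ℝ) (γ : ℝ → Measure X) : Prop :=
  0 ≤ b ∧ (∀ t ∈ Icc (0:ℝ) b, γ t ∈ MM μ) ∧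
  ∀ s ∈ Icc (0:ℝ) b, ∀ t ∈ Icc (0:ℝ) b, dM h μ (γ s) (γ t) ≤ |s - t|

/-- A rectifiable curve in `𝓧 = 𝓜 \ {0}` subparametrized by arc-length. -/
def IsCurveX (h : ℝ → ℝ) (μ : Measure X) (b : ℝ) (γ : ℝ → Measure X) : Prop :=
  IsCurveM h μ b γ ∧ ∀ t ∈ Icc (0:ℝ) b, γ t ≠ 0

/-- The mean value functional `F_f(η) = (1/‖η‖) ∫ f dη`. -/
noncomputable def FfM (f : X → ℝ) (η : Measure X) : ℝ := (∫ x, f x ∂η) / mass η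

/-- `r_F^ε(η)`. -/
noncomputable def rGradE (h : ℝ → ℝ) (μ : Measure X) (F : Measure X → ℝ) (ε : ℝ)
    (η : Measure X) : ℝ≥0∞ :=
  sSup {r : ℝ≥0∞ | ∃ (b : ℝ) (γ : ℝ → Measure X) (s : ℝ),
    IsCurveX h μ b γ ∧ γ 0 = η ∧ 0 < s ∧ s < ε ∧ s < b ∧
    r = ENNReal.ofReal (|F (γ s) - F η| / s)}

/-- The upper gradient `r_F(η) = lim_{ε→0} r_F^ε(η)`. -/
noncomputable def rGrad (h : ℝ → ℝ) (μ : Measure X) (F : Measure X → ℝ)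
    (η : Measure X) : ℝ≥0∞ :=
  ⨅ (ε : ℝ) (_ : 0 < ε), rGradE h μ F ε η

/-- Upper semicontinuous regularization along curves of `g : 𝓧 → [0,∞]`. -/
noncomputable def breveG (h : ℝ → ℝ) (μ : Measure X) (g : Measure X → ℝ≥0∞)
    (η : Measure X) : ℝ≥0∞ :=
  ⨅ (s : ℝ) (_ : 0 < s), sSup {r : ℝ≥0∞ | ∃ (b : ℝ) (γ : ℝ → Measure X) (t : ℝ),
    IsCurveX h μ b γ ∧ γ 0 = η ∧ 0 ≤ t ∧ t < s ∧ t ≤ b ∧ r = g (γ t)}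

/-- `sup { Σᵢ G(ηᵢ)^p ‖ηᵢ‖ }` over finite disjointly supported families in `𝓧`. -/
noncomputable def LpPow (μ : Measure X) (p : ℝ) (G : Measure X → ℝ≥0∞) : ℝ≥0∞ :=
  sSup {r : ℝ≥0∞ | ∃ (k : ℕ) (η : Fin k → Measure X),
    (∀ i, η i ∈ MM μ ∧ η i ≠ 0) ∧
    (∀ i j, i ≠ j → Disjoint (msupp (η i)) (msupp (η j))) ∧
    r = ∑ i, (G (η i)) ^ p * (η i) Set.univ}

/-- The `𝓛^p(𝓧)` norm of `F : 𝓧 → ℝ`. -/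
noncomputable def LpNorm (μ : Measure X) (p : ℝ) (F : Measure X → ℝ) : ℝ≥0∞ :=
  (LpPow μ p (fun η => ENNReal.ofReal |F η|)) ^ (1 / p)

/-- The `𝓛^p(𝓧)` norm for an extended exponent `p ∈ [1,∞]`. -/
noncomputable def LpNormE (μ : Measure X) (p : ℝ≥0∞) (F : Measure X → ℝ) : ℝ≥0∞ :=
  if p = ∞ then ⨆ (η : Measure X) (_ : η ∈ MM μ ∧ η ≠ 0), ENNReal.ofReal |F η|
  else LpNorm μ p.toReal F


section Aux
variable {X : Type*} [MetricSpace X] [MeasurableSpace X]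

lemma mem_LpPow_le (μ : Measure X) (p : ℝ) (G : Measure X → ℝ≥0∞) {k : ℕ}
    (η : Fin k → Measure X) (h1 : ∀ i, η i ∈ MM μ ∧ η i ≠ 0)
    (h2 : ∀ i j, i ≠ j → Disjoint (msupp (η i)) (msupp (η j))) :
    (∑ i, (G (η i)) ^ p * (η i) Set.univ) ≤ LpPow μ p G :=
  le_sSup ⟨k, η, h1, h2, rfl⟩

end Aux


/-- `𝓛^p(𝓧)` is a vector space and `‖·‖_{𝓛^p}` is a norm on it:
it is subadditive, absolutely homogeneous, and definite (on `𝓧`). -/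
theorem stmt9 {X : Type*} [MetricSpace X] [MeasurableSpace X] [BorelSpace X]
    [LocallyCompactSpace X] [TopologicalSpace.SeparableSpace X]
    (μ : Measure X) [μ.Regular]
    (hμ : ∀ (x : X) (r : ℝ), 0 < r → 0 < μ (Metric.ball x r) ∧ μ (Metric.ball x r) < ⊤)
    (p : ℝ) (hp : 1 ≤ p) :
    (∀ F G : Measure X → ℝ,
      LpNorm μ p (fun η => F η + G η) ≤ LpNorm μ p F + LpNorm μ p G) ∧
    (∀ (a : ℝ) (F : Measure X → ℝ),
      LpNorm μ p (fun η => a * F η) = ENNReal.ofReal |a| * LpNorm μ p F) ∧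
    (∀ F : Measure X → ℝ, LpNorm μ p F = 0 → ∀ η ∈ MM μ, η ≠ 0 → F η = 0) := by
  
  have hp0 : (0:ℝ) < p := lt_of_lt_of_le one_pos hp
  have hpne : p ≠ 0 := ne_of_gt hp0
  have hinv : 0 < 1 / p := by positivity
  refine ⟨?_, ?_, ?_⟩
  · -- subadditivity
    intro F G
    set B := LpNorm μ p F + LpNorm μ p G with hB
    have key : LpPow μ p (fun η => ENNReal.ofReal |F η + G η|) ≤ B ^ p := by
      apply sSup_le
      rintro r ⟨k, η, h1, h2, rfl⟩
      set f : Fin k → ℝ≥0∞ := fun i => ENNReal.ofReal |F (η i)| * ((η i) Set.univ) ^ (1/p) with hf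
      set g : Fin k → ℝ≥0∞ := fun i => ENNReal.ofReal |G (η i)| * ((η i) Set.univ) ^ (1/p) with hg
      have hmeas : ∀ i : Fin k, (((η i) Set.univ) ^ (1/p)) ^ p = (η i) Set.univ := by
        intro i
        rw [← ENNReal.rpow_mul, one_div_mul_cancel hpne, ENNReal.rpow_one]
      have hterm : ∀ i : Fin k,
          (ENNReal.ofReal |F (η i) + G (η i)|) ^ p * (η i) Set.univ ≤ (f i + g i) ^ p := by
        intro i
        have h1' : ENNReal.ofReal |F (η i) + G (η i)| ≤
            ENNReal.ofReal |F (η i)| + ENNReal.ofReal |G (η i)| := by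
          rw [← ENNReal.ofReal_add (abs_nonneg _) (abs_nonneg _)]
          exact ENNReal.ofReal_le_ofReal (abs_add_le _ _)
        have : f i + g i = (ENNReal.ofReal |F (η i)| + ENNReal.ofReal |G (η i)|) *
            ((η i) Set.univ) ^ (1/p) := by rw [hf, hg]; ring
        rw [this, ENNReal.mul_rpow_of_nonneg _ _ (le_of_lt hp0), hmeas i]
        exact mul_le_mul_of_nonneg_right (ENNReal.rpow_le_rpow h1' (le_of_lt hp0)) zero_le
      have hsum : (∑ i, (ENNReal.ofReal |F (η i) + G (η i)|) ^ p * (η i) Set.univ)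
          ≤ ∑ i, (f i + g i) ^ p := Finset.sum_le_sum fun i _ => hterm i
      have hmink := ENNReal.Lp_add_le (s := Finset.univ) (f := f) (g := g) hp
      have hfp : ∀ i : Fin k, f i ^ p = (ENNReal.ofReal |F (η i)|) ^ p * (η i) Set.univ := by
        intro i; rw [hf, ENNReal.mul_rpow_of_nonneg _ _ (le_of_lt hp0), hmeas i]
      have hgp : ∀ i : Fin k, g i ^ p = (ENNReal.ofReal |G (η i)|) ^ p * (η i) Set.univ := by
        intro i; rw [hg, ENNReal.mul_rpow_of_nonneg _ _ (le_of_lt hp0), hmeas i]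
      have hFle : (∑ i, f i ^ p) ^ (1/p) ≤ LpNorm μ p F := by
        apply ENNReal.rpow_le_rpow _ (le_of_lt hinv)
        simp only [hfp]
        exact mem_LpPow_le μ p _ η h1 h2
      have hGle : (∑ i, g i ^ p) ^ (1/p) ≤ LpNorm μ p G := by
        apply ENNReal.rpow_le_rpow _ (le_of_lt hinv)
        simp only [hgp]
        exact mem_LpPow_le μ p _ η h1 h2
      have hc : (∑ i, (f i + g i) ^ p) ^ (1/p) ≤ B :=
        le_trans hmink (add_le_add hFle hGle)
      calc (∑ i, (ENNReal.ofReal |F (η i) + G (η i)|) ^ p * (η i) Set.univ)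
          ≤ ∑ i, (f i + g i) ^ p := hsum
        _ = ((∑ i, (f i + g i) ^ p) ^ (1/p)) ^ p := by
            rw [← ENNReal.rpow_mul, one_div_mul_cancel hpne, ENNReal.rpow_one]
        _ ≤ B ^ p := ENNReal.rpow_le_rpow hc (le_of_lt hp0)
    calc LpNorm μ p (fun η => F η + G η)
        ≤ (B ^ p) ^ (1/p) := ENNReal.rpow_le_rpow key (le_of_lt hinv)
      _ = B := by rw [← ENNReal.rpow_mul, mul_one_div_cancel hpne, ENNReal.rpow_one]
  · -- homogeneity
    intro a F
    have hset : LpPow μ p (fun η => ENNReal.ofReal |a * F η|) =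
        (ENNReal.ofReal |a|) ^ p * LpPow μ p (fun η => ENNReal.ofReal |F η|) := by
      unfold LpPow
      rw [ENNReal.mul_sSup]
      apply le_antisymm
      · apply sSup_le
        rintro r ⟨k, η, h1, h2, rfl⟩
        have : (∑ i, (ENNReal.ofReal |a * F (η i)|) ^ p * (η i) Set.univ)
            = (ENNReal.ofReal |a|) ^ p *
              ∑ i, (ENNReal.ofReal |F (η i)|) ^ p * (η i) Set.univ := by
          rw [Finset.mul_sum]
          refine Finset.sum_congr rfl fun i _ => ?_
          rw [abs_mul, ENNReal.ofReal_mul (abs_nonneg a),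
            ENNReal.mul_rpow_of_nonneg _ _ (le_of_lt hp0), mul_assoc]
        rw [this]
        exact le_iSup₂_of_le (∑ i, (ENNReal.ofReal |F (η i)|) ^ p * (η i) Set.univ)
          ⟨k, η, h1, h2, rfl⟩ le_rfl
      · apply iSup₂_le
        rintro r ⟨k, η, h1, h2, rfl⟩
        apply le_sSup
        refine ⟨k, η, h1, h2, ?_⟩
        rw [Finset.mul_sum]
        refine Finset.sum_congr rfl fun i _ => ?_
        simp only [abs_mul, ENNReal.ofReal_mul (abs_nonneg a),
          ENNReal.mul_rpow_of_nonneg _ _ (le_of_lt hp0), mul_assoc]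
    unfold LpNorm
    rw [hset, ENNReal.mul_rpow_of_nonneg _ _ (le_of_lt hinv), ← ENNReal.rpow_mul,
      mul_one_div_cancel hpne, ENNReal.rpow_one]
  · -- definiteness
    intro F h η hη hη0
    have hL : LpPow μ p (fun η => ENNReal.ofReal |F η|) = 0 := by
      have := (ENNReal.rpow_eq_zero_iff).mp h
      rcases this with ⟨h0, _⟩ | ⟨_, hlt⟩
      · exact h0
      · linarith
    have hle : (ENNReal.ofReal |F η|) ^ p * η Set.univ ≤ 0 := by
      have := mem_LpPow_le μ p (fun η => ENNReal.ofReal |F η|)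
        (fun _ : Fin 1 => η) (fun _ => ⟨hη, hη0⟩)
        (fun i j hij => absurd (Subsingleton.elim i j) hij)
      rw [hL] at this
      simpa using this
    have hzero : (ENNReal.ofReal |F η|) ^ p * η Set.univ = 0 := le_antisymm hle zero_le
    rcases mul_eq_zero.mp hzero with h0 | h0
    · rcases (ENNReal.rpow_eq_zero_iff).mp h0 with ⟨h0', _⟩ | ⟨h0', _⟩
      · have := ENNReal.ofReal_eq_zero.mp h0'
        have := abs_nonneg (F η)
        have : |F η| = 0 := le_antisymm (ENNReal.ofReal_eq_zero.mp h0') (abs_nonneg _)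
        exact abs_eq_zero.mp this
      · exact absurd h0' ENNReal.ofReal_ne_top
    · exact absurd h0 (fun hh => hη0 (Measure.measure_univ_eq_zero.mp hh))
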